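/- Let π be any perfect matching with ⟨π, S(γ)⟩ = 0 for a ray γ of the global zig-zag fan, and let η be any representative zig-zag path of γ. Then either π − Zig(η) ∈ N^{Q_1} or π − Zag(η) ∈ N^{Q_1}; that is, π evaluates to 1 on all zigs of η or on all zags of η. -/

import Mathlib

/-- Combinatorial data of the universal cover of the quiver (with faces) dual to a dimer
model on a 2-torus, together with the action of the deck transformation group `ℤ × ℤ`.
Every arrow lies in the boundary of exactly one black face and one white face. -/
structure DimerCover where
  V : Type
  A : Type
  F : Type
  hd : A → V
  tl : A → V
  black : F → Prop
  bface : A → F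
  wface : A → F
  bdry : F → Finset A
  bface_black : ∀ a, black (bface a)
  wface_white : ∀ a, ¬ black (wface a)
  mem_bface : ∀ a, a ∈ bdry (bface a)
  mem_wface : ∀ a, a ∈ bdry (wface a)
  mem_only : ∀ a f, a ∈ bdry f → f = bface a ∨ f = wface a
  act : ℤ × ℤ → A → A
  actV : ℤ × ℤ → V → V
  actF : ℤ × ℤ → F → F
  act_zero : ∀ a, act 0 a = a
  act_add : ∀ g g' a, act (g + g') a = act g (act g' a)
  act_free : ∀ g a, act g a = a → g = 0
  hd_act : ∀ g a, hd (act g a) = actV g (hd a)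
  tl_act : ∀ g a, tl (act g a) = actV g (tl a)
  bface_act : ∀ g a, bface (act g a) = actF g (bface a)
  wface_act : ∀ g a, wface (act g a) = actF g (wface a)
  bdry_act : ∀ g a f, a ∈ bdry f → act g a ∈ bdry (actF g f)
  black_act : ∀ g f, black (actF g f) ↔ black f

/-- A zig-zag flow on the universal cover: a doubly infinite path `η : ℤ → Q̃₁` such that
`η (2n)` and `η (2n+1)` lie in the boundary of a common black face and `η (2n−1)` and
`η (2n)` lie in the boundary of a common white face.  Arrows in even positions are the
zigs, arrows in odd positions the zags. -/
structure ZigZagFlow (D : DimerCover) where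
  η : ℤ → D.A
  comp : ∀ n : ℤ, D.hd (η n) = D.tl (η (n + 1))
  pairB : ∀ n : ℤ, D.bface (η (2 * n)) = D.bface (η (2 * n + 1))
  pairW : ∀ n : ℤ, D.wface (η (2 * n - 1)) = D.wface (η (2 * n))

namespace DimerCover

variable (D : DimerCover)

/-- `a` is an arrow of the zig-zag flow `Z`. -/
def OnFlow (Z : ZigZagFlow D) (a : D.A) : Prop := ∃ n : ℤ, Z.η n = a

/-- The zig-zag flows `Z` and `Z'` intersect in the arrow `a`. -/
def FlowsMeet (Z Z' : ZigZagFlow D) (a : D.A) : Prop := D.OnFlow Z a ∧ D.OnFlow Z' a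

/-- `g` is a period of the zig-zag flow `Z`, of (positive) length `k`. -/
def IsPeriodOf (Z : ZigZagFlow D) (g : ℤ × ℤ) (k : ℤ) : Prop :=
  0 < k ∧ ∀ n : ℤ, Z.η (n + k) = D.act g (Z.η n)

/-- `g ∈ H₁(T²) ≅ ℤ × ℤ` is the homology class of the zig-zag flow `Z`: the deck
transformation corresponding to one (minimal) period of `Z`. -/
def HomClass (Z : ZigZagFlow D) (g : ℤ × ℤ) : Prop :=
  ∃ k : ℤ, D.IsPeriodOf Z g k ∧
    ∀ (g' : ℤ × ℤ) (k' : ℤ), D.IsPeriodOf Z g' k' → k ≤ k'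

/-- `Z'` is a reparametrisation of `Z` (they define the same zig-zag flow). -/
def Reparam (Z Z' : ZigZagFlow D) : Prop := ∃ m : ℤ, ∀ n : ℤ, Z'.η n = Z.η (n + 2 * m)

end DimerCover

/-- Linear independence of two homology classes in `H₁(T²) ≅ ℤ × ℤ`. -/
def Indep (g g' : ℤ × ℤ) : Prop := g.1 * g'.2 - g.2 * g'.1 ≠ 0

/-- Geometric consistency of a dimer model, characterised in terms of zig-zag flows on the
universal cover: (a) no zig-zag flow intersects itself; (b) two zig-zag flows whose
homology classes are linearly independent intersect in precisely one arrow; (c) two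
distinct zig-zag flows whose homology classes are linearly dependent do not intersect. -/
def DimerCover.GeomConsistent (D : DimerCover) : Prop :=
  (∀ Z : ZigZagFlow D, Function.Injective Z.η) ∧
  (∀ (Z Z' : ZigZagFlow D) (g g' : ℤ × ℤ), D.HomClass Z g → D.HomClass Z' g' →
    Indep g g' → ∃! a, D.FlowsMeet Z Z' a) ∧
  (∀ (Z Z' : ZigZagFlow D) (g g' : ℤ × ℤ), D.HomClass Z g → D.HomClass Z' g' →
    ¬ Indep g g' → ¬ D.Reparam Z Z' → ¬ ∃ a, D.FlowsMeet Z Z' a)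

namespace DimerCover

variable (D : DimerCover)

/-- The zig-zag flow `Z` intersects the boundary of the face `f`. -/
def MeetsFace (Z : ZigZagFlow D) (f : D.F) : Prop := ∃ a ∈ D.bdry f, D.OnFlow Z a

/-- `u` generates a ray of the local zig-zag fan `ξ(f)`: it is the homology class of some
zig-zag flow intersecting the boundary of `f`. -/
def LocalRay (f : D.F) (u : ℤ × ℤ) : Prop :=
  ∃ Z : ZigZagFlow D, D.HomClass Z u ∧ D.MeetsFace Z f

/-- `u` generates a ray of the global zig-zag fan `Ξ`: it is the homology class of some
zig-zag flow. -/
def GlobalRay (u : ℤ × ℤ) : Prop := ∃ Z : ZigZagFlow D, D.HomClass Z u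

end DimerCover

/-- `w` lies in the interior of the two-dimensional cone spanned by `u` and `u'`
in `H₁(T²) ⊗ ℝ`. -/
def InOpenCone (u u' w : ℤ × ℤ) : Prop :=
  ∃ α β : ℚ, 0 < α ∧ 0 < β ∧
    (w.1 : ℚ) = α * u.1 + β * u'.1 ∧ (w.2 : ℚ) = α * u.2 + β * u'.2

/-- `w` lies in the closed two-dimensional cone spanned by `u` and `u'`
in `H₁(T²) ⊗ ℝ`. -/
def InClosedCone (u u' w : ℤ × ℤ) : Prop :=
  ∃ α β : ℚ, 0 ≤ α ∧ 0 ≤ β ∧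
    (w.1 : ℚ) = α * u.1 + β * u'.1 ∧ (w.2 : ℚ) = α * u.2 + β * u'.2

namespace DimerCover

variable (D : DimerCover)

/-- The rays generated by `u` and `u'` span a two-dimensional cone of the local zig-zag
fan `ξ(f)`: both are rays of `ξ(f)`, they are linearly independent, and no ray of `ξ(f)`
lies strictly between them. -/
def SpansConeLocal (f : D.F) (u u' : ℤ × ℤ) : Prop :=
  D.LocalRay f u ∧ D.LocalRay f u' ∧ Indep u u' ∧
    ¬ ∃ w : ℤ × ℤ, D.LocalRay f w ∧ InOpenCone u u' w

/-- `σ` is the two-dimensional cone of the global zig-zag fan `Ξ` spanned by the rays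
generated by `u⁺` (the anticlockwise ray of `σ`) and `u⁻` (the clockwise ray): both are
rays of `Ξ`, `u⁺` is anticlockwise of `u⁻` within an angle less than `π`, and no ray of
`Ξ` lies strictly between them. -/
def GlobalCone (uP uM : ℤ × ℤ) : Prop :=
  D.GlobalRay uP ∧ D.GlobalRay uM ∧ Indep uP uM ∧
    0 < uM.1 * uP.2 - uM.2 * uP.1 ∧
    ¬ ∃ w : ℤ × ℤ, D.GlobalRay w ∧ InOpenCone uP uM w

/-- `a` is the arrow in the boundary of the face `f` corresponding to the unique
two-dimensional cone `σ_f` of the local zig-zag fan `ξ(f)` containing the image of the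
global cone `σ` spanned by `u⁺, u⁻`: the arrow of `∂f` in which the representative
zig-zag flows of the two rays of `σ_f` intersect. -/
def ConeArrow (f : D.F) (uP uM : ℤ × ℤ) (a : D.A) : Prop :=
  ∃ w w' : ℤ × ℤ, D.SpansConeLocal f w w' ∧
    InClosedCone w w' uP ∧ InClosedCone w w' uM ∧
    a ∈ D.bdry f ∧
    ∃ Z Z' : ZigZagFlow D, D.HomClass Z w ∧ D.HomClass Z' w' ∧
      D.MeetsFace Z f ∧ D.MeetsFace Z' f ∧ D.FlowsMeet Z Z' a

/-- A perfect matching of the dimer model, viewed equivariantly on the universal cover: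
a `ℤ²`-invariant `{0,1}`-valued function on the arrows whose sum over the boundary of
every face is `1`. -/
def IsPerfectMatching (P : D.A → ℤ) : Prop :=
  (∀ g a, P (D.act g a) = P a) ∧ (∀ a, P a = 0 ∨ P a = 1) ∧
    ∀ f : D.F, (∑ a ∈ D.bdry f, P a) = 1

/-- `P` is the perfect matching `P(σ)` associated to the two-dimensional cone `σ` of the
global zig-zag fan spanned by `u⁺` and `u⁻`: the perfect matching which, on the boundary
of each face `f`, is the indicator function of the arrow corresponding to the cone of
`ξ(f)` containing the image of `σ`. -/
def IsPsigma (uP uM : ℤ × ℤ) (P : D.A → ℤ) : Prop :=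
  D.IsPerfectMatching P ∧
    ∀ a : D.A, P a = 1 ↔ D.ConeArrow (D.bface a) uP uM a

/-- `a` is a zig (an arrow in even position) of some representative zig-zag flow of the
ray generated by `u`. -/
def IsZigOfRay (u : ℤ × ℤ) (a : D.A) : Prop :=
  ∃ Z : ZigZagFlow D, D.HomClass Z u ∧ ∃ n : ℤ, Z.η (2 * n) = a

/-- `a` is a zag (an arrow in odd position) of some representative zig-zag flow of the
ray generated by `u`. -/
def IsZagOfRay (u : ℤ × ℤ) (a : D.A) : Prop :=
  ∃ Z : ZigZagFlow D, D.HomClass Z u ∧ ∃ n : ℤ, Z.η (2 * n + 1) = a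

end DimerCover

/-- `a` is an arrow of the black or white boundary flow of the zig-zag flow `Z`: it lies
in the boundary of a black face containing a zig-zag pair of `Z` (resp. a white face
containing a zag-zig pair of `Z`) but is not one of the two arrows of `Z` in that face. -/
def DimerCover.BoundaryArrowOf (D : DimerCover) (Z : ZigZagFlow D) (a : D.A) : Prop :=
  ∃ n : ℤ,
    (a ∈ D.bdry (D.bface (Z.η (2 * n))) ∧ a ≠ Z.η (2 * n) ∧ a ≠ Z.η (2 * n + 1)) ∨
    (a ∈ D.bdry (D.wface (Z.η (2 * n))) ∧ a ≠ Z.η (2 * n) ∧ a ≠ Z.η (2 * n - 1))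

/-- `a` is an arrow of the system of boundary paths `S(γ)` of the ray `γ` generated by
`u`: an arrow of a (black or white) boundary path of some representative zig-zag flow of
`γ`.  A perfect matching `π` satisfies `⟨π, S(γ)⟩ = 0` exactly when it vanishes on all
such arrows. -/
def DimerCover.BoundaryArrowOfRay (D : DimerCover) (u : ℤ × ℤ) (a : D.A) : Prop :=
  ∃ Z : ZigZagFlow D, D.HomClass Z u ∧ D.BoundaryArrowOf Z a

/-!
Let `π` be any perfect matching of a geometrically consistent dimer model with
`⟨π, S(γ)⟩ = 0` for a ray `γ` (generated by `u`) of the global zig-zag fan, and let `η`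
be any representative zig-zag flow of `γ`.  Then either `π − Zig(η) ∈ ℕ^{Q₁}` or
`π − Zag(η) ∈ ℕ^{Q₁}`: `π` evaluates to `1` on all zigs of `η` or on all zags of `η`.
-/
theorem matching_vanishing_on_boundary_system_resonates
    (D : DimerCover) (hGC : D.GeomConsistent)
    (u : ℤ × ℤ) (hray : D.GlobalRay u)
    (π : D.A → ℤ) (hπ : D.IsPerfectMatching π)
    (hvanish : ∀ a : D.A, D.BoundaryArrowOfRay u a → π a = 0)
    (Z : ZigZagFlow D) (hZ : D.HomClass Z u) :
    (∀ n : ℤ, π (Z.η (2 * n)) = 1) ∨ (∀ n : ℤ, π (Z.η (2 * n + 1)) = 1) := by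
  classical
  have hinj := hGC.1 Z
  -- Black face relation: π on a zig-zag pair sums to 1.
  have hB : ∀ n : ℤ, π (Z.η (2 * n)) + π (Z.η (2 * n + 1)) = 1 := by
    intro n
    set f := D.bface (Z.η (2 * n)) with hf
    have h1 : Z.η (2 * n) ∈ D.bdry f := D.mem_bface _
    have h2 : Z.η (2 * n + 1) ∈ D.bdry f := by
      rw [hf, Z.pairB n]; exact D.mem_bface _
    have hne : Z.η (2 * n) ≠ Z.η (2 * n + 1) := by
      intro h; have := hinj h; omega
    calc π (Z.η (2 * n)) + π (Z.η (2 * n + 1))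
        = ∑ a ∈ {Z.η (2 * n), Z.η (2 * n + 1)}, π a := (Finset.sum_pair hne).symm
      _ = ∑ a ∈ D.bdry f, π a := by
          refine Finset.sum_subset ?_ ?_
          · intro x hx
            simp only [Finset.mem_insert, Finset.mem_singleton] at hx
            rcases hx with rfl | rfl
            · exact h1
            · exact h2
          · intro x hx hxn
            simp only [Finset.mem_insert, Finset.mem_singleton, not_or] at hxn
            exact hvanish x ⟨Z, hZ, n, Or.inl ⟨hx, hxn.1, hxn.2⟩⟩
      _ = 1 := hπ.2.2 f
  -- White face relation: π on a zag-zig pair sums to 1.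
  have hW : ∀ n : ℤ, π (Z.η (2 * n - 1)) + π (Z.η (2 * n)) = 1 := by
    intro n
    set f := D.wface (Z.η (2 * n)) with hf
    have h1 : Z.η (2 * n) ∈ D.bdry f := D.mem_wface _
    have h2 : Z.η (2 * n - 1) ∈ D.bdry f := by
      rw [hf, ← Z.pairW n]; exact D.mem_wface _
    have hne : Z.η (2 * n - 1) ≠ Z.η (2 * n) := by
      intro h; have := hinj h; omega
    calc π (Z.η (2 * n - 1)) + π (Z.η (2 * n))
        = ∑ a ∈ {Z.η (2 * n - 1), Z.η (2 * n)}, π a := (Finset.sum_pair hne).symm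
      _ = ∑ a ∈ D.bdry f, π a := by
          refine Finset.sum_subset ?_ ?_
          · intro x hx
            simp only [Finset.mem_insert, Finset.mem_singleton] at hx
            rcases hx with rfl | rfl
            · exact h2
            · exact h1
          · intro x hx hxn
            simp only [Finset.mem_insert, Finset.mem_singleton, not_or] at hxn
            exact hvanish x ⟨Z, hZ, n, Or.inr ⟨hx, hxn.2, hxn.1⟩⟩
      _ = 1 := hπ.2.2 f
  -- The value of π on zigs is constant.
  have hstep : ∀ n : ℤ, π (Z.η (2 * (n + 1))) = π (Z.η (2 * n)) := by
    intro n
    have hb := hB n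
    have hw := hW (n + 1)
    rw [show 2 * (n + 1) - 1 = 2 * n + 1 by ring] at hw
    rw [show 2 * (n + 1) = 2 * n + 2 by ring] at hw ⊢
    omega
  have hconst : ∀ n : ℤ, π (Z.η (2 * n)) = π (Z.η 0) := by
    intro n
    induction n using Int.induction_on with
    | zero => norm_num
    | succ k ih => rw [hstep k]; exact ih
    | pred k ih =>
        have h := hstep (-(k : ℤ) - 1)
        rw [show (-(k : ℤ) - 1) + 1 = -(k : ℤ) by ring] at h
        rw [← h]; exact ih
  rcases hπ.2.1 (Z.η 0) with h0 | h1
  · right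
    intro n
    have hb := hB n
    have hc := hconst n
    omega
  · left
    intro n
    rw [hconst n]; exact h1
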